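/- For every p ∈ [0,1], the limit as n → ∞ of (1/n)·∑_{m=0}^{n} C(n,m)·p^m·(1−p)^{n−m}·log₂ C(n,m) equals h(p). -/

import Mathlib

lemma sum_binP (p : ℝ) (n : ℕ) :
    ∑ m ∈ Finset.range (n + 1), (n.choose m : ℝ) * p ^ m * (1 - p) ^ (n - m) = 1 := by
  have h := add_pow p (1 - p) n
  simp only [add_sub_cancel, one_pow] at h
  refine Eq.trans (Finset.sum_congr rfl fun m hm => by ring) h.symm

lemma sum_binP_mul (p : ℝ) (n : ℕ) :
    ∑ m ∈ Finset.range (n + 1), (m : ℝ) * ((n.choose m : ℝ) * p ^ m * (1 - p) ^ (n - m)) = n * p := by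
  have h := congrArg (Polynomial.eval p) (bernsteinPolynomial.sum_smul ℝ n)
  simp only [Polynomial.eval_finset_sum, bernsteinPolynomial, nsmul_eq_mul, Polynomial.eval_mul,
    Polynomial.eval_natCast, Polynomial.eval_pow, Polynomial.eval_X, Polynomial.eval_sub,
    Polynomial.eval_one, Polynomial.eval_smul] at h
  exact h

/-- The binary entropy function with logarithm to base 2
(with the convention `0 · log₂ 0 = 0`, which holds since `Real.logb 2 0 = 0`). -/
noncomputable def binEntropy2 (p : ℝ) : ℝ :=
  -(p * Real.logb 2 p) - (1 - p) * Real.logb 2 (1 - p)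

section main

variable {p : ℝ}

/-- the binomial probability -/
noncomputable def binP (p : ℝ) (n m : ℕ) : ℝ := (n.choose m : ℝ) * p ^ m * (1 - p) ^ (n - m)

lemma binP_pos (hp0 : 0 < p) (hp1 : p < 1) (n m : ℕ) : 0 < binP p n m ∨ n.choose m = 0 := by
  rcases Nat.eq_zero_or_pos (n.choose m) with h | h
  · exact Or.inr h
  · left
    exact mul_pos (mul_pos (by exact_mod_cast h) (pow_pos hp0 m)) (pow_pos (by linarith) _)

lemma binP_pos' (hp0 : 0 < p) (hp1 : p < 1) {n m : ℕ} (hm : m ∈ Finset.range (n + 1)) :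
    0 < binP p n m := by
  rcases binP_pos hp0 hp1 n m with h | h
  · exact h
  · exact absurd h (Nat.choose_pos (Nat.lt_succ_iff.mp (Finset.mem_range.mp hm))).ne'

/-- key entropy identity -/
lemma key_identity (hp0 : 0 < p) (hp1 : p < 1) (n : ℕ) :
    ∑ m ∈ Finset.range (n + 1), binP p n m * Real.logb 2 (n.choose m) =
      n * binEntropy2 p - ∑ m ∈ Finset.range (n + 1), binP p n m * (- Real.logb 2 (binP p n m)) := by
  have hq0 : (0:ℝ) < 1 - p := by linarith
  have h1 : ∀ m ∈ Finset.range (n + 1),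
      binP p n m * Real.logb 2 (n.choose m) =
        binP p n m * Real.logb 2 (binP p n m)
          - (m : ℝ) * binP p n m * Real.logb 2 p
          - ((n : ℝ) - m) * binP p n m * Real.logb 2 (1 - p) := by
    intro m hm
    have hmn : m ≤ n := Nat.lt_succ_iff.mp (Finset.mem_range.mp hm)
    have hc : (0:ℝ) < (n.choose m : ℝ) := by exact_mod_cast Nat.choose_pos hmn
    have : Real.logb 2 (binP p n m) =
        Real.logb 2 (n.choose m) + m * Real.logb 2 p + ((n : ℝ) - m) * Real.logb 2 (1 - p) := by
      rw [binP, Real.logb_mul (by positivity) (by positivity),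
        Real.logb_mul (by positivity) (by positivity), Real.logb_pow, Real.logb_pow]
      have : ((n - m : ℕ) : ℝ) = (n : ℝ) - m := by
        rw [Nat.cast_sub hmn]
      rw [this]
    rw [this]; ring
  rw [Finset.sum_congr rfl h1]
  have hsum1 : ∑ m ∈ Finset.range (n + 1), binP p n m = 1 := sum_binP p n
  have hsum2 : ∑ m ∈ Finset.range (n + 1), (m : ℝ) * binP p n m = n * p := by
    simpa [binP, mul_assoc] using sum_binP_mul p n
  have hsum3 : ∑ m ∈ Finset.range (n + 1), ((n : ℝ) - m) * binP p n m = n * (1 - p) := by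
    have : ∀ m ∈ Finset.range (n+1), ((n : ℝ) - m) * binP p n m
        = (n:ℝ) * binP p n m - (m:ℝ) * binP p n m := fun m _ => by ring
    rw [Finset.sum_congr rfl this, Finset.sum_sub_distrib, ← Finset.mul_sum, hsum1, hsum2]
    ring
  simp only [Finset.sum_sub_distrib]
  rw [show ∀ s : Finset ℕ, ∑ m ∈ s, (m : ℝ) * binP p n m * Real.logb 2 p
      = (∑ m ∈ s, (m : ℝ) * binP p n m) * Real.logb 2 p from fun s => (Finset.sum_mul ..).symm,
    show ∀ s : Finset ℕ, ∑ m ∈ s, ((n:ℝ) - m) * binP p n m * Real.logb 2 (1 - p)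
      = (∑ m ∈ s, ((n:ℝ) - m) * binP p n m) * Real.logb 2 (1 - p) from
        fun s => (Finset.sum_mul ..).symm, hsum2, hsum3]
  simp only [binEntropy2, mul_neg, Finset.sum_neg_distrib]
  ring

lemma sum_binP' (p : ℝ) (n : ℕ) : ∑ m ∈ Finset.range (n + 1), binP p n m = 1 :=
  sum_binP p n

lemma binP_le_one (hp0 : 0 < p) (hp1 : p < 1) {n m : ℕ} (hm : m ∈ Finset.range (n + 1)) :
    binP p n m ≤ 1 := by
  have := Finset.single_le_sum (f := binP p n)
    (fun i hi => (binP_pos' hp0 hp1 hi).le) hm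
  rw [sum_binP' p n] at this; exact this

lemma entropy_nonneg (hp0 : 0 < p) (hp1 : p < 1) (n : ℕ) :
    0 ≤ ∑ m ∈ Finset.range (n + 1), binP p n m * (- Real.logb 2 (binP p n m)) := by
  apply Finset.sum_nonneg
  intro m hm
  have h1 := binP_pos' hp0 hp1 hm
  have h2 := binP_le_one hp0 hp1 hm
  have : Real.logb 2 (binP p n m) ≤ 0 := Real.logb_nonpos one_lt_two h1.le h2
  nlinarith

lemma entropy_le (hp0 : 0 < p) (hp1 : p < 1) (n : ℕ) :
    ∑ m ∈ Finset.range (n + 1), binP p n m * (- Real.logb 2 (binP p n m))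
      ≤ Real.logb 2 (n + 1) := by
  have hlog2 : (0:ℝ) < Real.log 2 := Real.log_pos one_lt_two
  have jensen := (strictConcaveOn_log_Ioi.concaveOn).le_map_sum
    (t := Finset.range (n + 1)) (w := binP p n) (p := fun m => (binP p n m)⁻¹)
    (fun i hi => (binP_pos' hp0 hp1 hi).le) (sum_binP' p n)
    (fun i hi => Set.mem_Ioi.mpr (inv_pos.mpr (binP_pos' hp0 hp1 hi)))
  simp only [smul_eq_mul] at jensen
  have hsum : ∑ i ∈ Finset.range (n + 1), binP p n i * (binP p n i)⁻¹ = (n : ℝ) + 1 := by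
    rw [Finset.sum_congr rfl (fun i hi => mul_inv_cancel₀ (binP_pos' hp0 hp1 hi).ne')]
    simp
  rw [hsum] at jensen
  have heq : ∀ m ∈ Finset.range (n + 1),
      binP p n m * (- Real.logb 2 (binP p n m))
        = binP p n m * Real.log (binP p n m)⁻¹ / Real.log 2 := by
    intro m hm
    rw [Real.log_inv, Real.logb]
    ring
  rw [Finset.sum_congr rfl heq, ← Finset.sum_div, Real.logb, div_le_div_iff_of_pos_right hlog2]
  exact jensen

end main

theorem statement8 (p : ℝ) (hp0 : 0 ≤ p) (hp1 : p ≤ 1) :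
    Filter.Tendsto (fun n : ℕ =>
      (1 / (n : ℝ)) * ∑ m ∈ Finset.range (n + 1),
        (n.choose m : ℝ) * p ^ m * (1 - p) ^ (n - m) * Real.logb 2 (n.choose m))
      Filter.atTop (nhds (binEntropy2 p)) := by
  rcases eq_or_lt_of_le hp0 with h0 | h0
  · -- p = 0
    have : binEntropy2 p = 0 := by simp [binEntropy2, ← h0]
    rw [this]
    have hz : ∀ n : ℕ, (1 / (n : ℝ)) * ∑ m ∈ Finset.range (n + 1),
        (n.choose m : ℝ) * p ^ m * (1 - p) ^ (n - m) * Real.logb 2 (n.choose m) = 0 := by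
      intro n
      rw [Finset.sum_eq_zero, mul_zero]
      intro m hm
      cases m with
      | zero => simp [← h0]
      | succ k => simp [← h0, zero_pow]
    simp only [hz]
    exact tendsto_const_nhds
  rcases eq_or_lt_of_le hp1 with h1 | h1
  · -- p = 1
    have : binEntropy2 p = 0 := by simp [binEntropy2, h1]
    rw [this]
    have hz : ∀ n : ℕ, (1 / (n : ℝ)) * ∑ m ∈ Finset.range (n + 1),
        (n.choose m : ℝ) * p ^ m * (1 - p) ^ (n - m) * Real.logb 2 (n.choose m) = 0 := by
      intro n
      rw [Finset.sum_eq_zero, mul_zero]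
      intro m hm
      rcases eq_or_lt_of_le (Nat.lt_succ_iff.mp (Finset.mem_range.mp hm)) with he | hlt
      · subst he; simp [h1]
      · simp [h1, Nat.sub_ne_zero_of_lt hlt, zero_pow]
    simp only [hz]
    exact tendsto_const_nhds
  -- 0 < p < 1
  have key : ∀ n : ℕ, 1 ≤ n →
      binEntropy2 p - Real.logb 2 (n + 1) / n ≤
        (1 / (n : ℝ)) * ∑ m ∈ Finset.range (n + 1),
          (n.choose m : ℝ) * p ^ m * (1 - p) ^ (n - m) * Real.logb 2 (n.choose m) ∧
      (1 / (n : ℝ)) * ∑ m ∈ Finset.range (n + 1),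
          (n.choose m : ℝ) * p ^ m * (1 - p) ^ (n - m) * Real.logb 2 (n.choose m)
        ≤ binEntropy2 p := by
    intro n hn
    have hnpos : (0:ℝ) < n := by exact_mod_cast hn
    have hsum : ∑ m ∈ Finset.range (n + 1),
        (n.choose m : ℝ) * p ^ m * (1 - p) ^ (n - m) * Real.logb 2 (n.choose m)
        = ∑ m ∈ Finset.range (n + 1), binP p n m * Real.logb 2 (n.choose m) := rfl
    rw [hsum, key_identity h0 h1 n]
    set H := ∑ m ∈ Finset.range (n + 1), binP p n m * (- Real.logb 2 (binP p n m)) with hH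
    have hH0 := entropy_nonneg h0 h1 n
    have hH1 := entropy_le h0 h1 n
    rw [← hH] at hH0 hH1
    have e : (1/(n:ℝ)) * ((n:ℝ) * binEntropy2 p - H) = binEntropy2 p - H / n := by
      field_simp
    rw [e]
    constructor
    · have h2 : H / n ≤ Real.logb 2 ((n:ℝ) + 1) / n := by gcongr
      linarith
    · have h2 : 0 ≤ H / n := div_nonneg hH0 hnpos.le
      linarith
  have t1 : Filter.Tendsto (fun x : ℝ => Real.log x ^ 1 / (1 * x + (-1)))
      Filter.atTop (nhds 0) := Real.tendsto_pow_log_div_mul_add_atTop 1 (-1) 1 one_ne_zero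
  have t2 : Filter.Tendsto (fun n : ℕ => ((n:ℝ)+1)) Filter.atTop Filter.atTop :=
    Filter.tendsto_atTop_add_const_right _ 1 tendsto_natCast_atTop_atTop
  have t4 : Filter.Tendsto (fun n : ℕ => Real.log ((n:ℝ)+1) / n) Filter.atTop (nhds 0) := by
    have := t1.comp t2
    convert this using 2 with n
    simp [Function.comp]
  have t5 : Filter.Tendsto (fun n : ℕ => Real.logb 2 ((n:ℝ)+1) / n) Filter.atTop (nhds 0) := by
    have heq : (fun n : ℕ => Real.logb 2 ((n:ℝ)+1) / n)
        = fun n : ℕ => (Real.log ((n:ℝ)+1) / n) * (Real.log 2)⁻¹ := by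
      funext n; rw [Real.logb]; ring
    rw [heq]
    simpa using t4.mul_const (Real.log 2)⁻¹
  have hlim : Filter.Tendsto (fun n : ℕ => binEntropy2 p - Real.logb 2 ((n:ℝ)+1) / n)
      Filter.atTop (nhds (binEntropy2 p)) := by
    simpa using
      (tendsto_const_nhds : Filter.Tendsto (fun _ : ℕ => binEntropy2 p) Filter.atTop
        (nhds (binEntropy2 p))).sub t5
  apply tendsto_of_tendsto_of_tendsto_of_le_of_le' hlim tendsto_const_nhds
  · filter_upwards [Filter.eventually_ge_atTop 1] with n hn using (key n hn).1
  · filter_upwards [Filter.eventually_ge_atTop 1] with n hn using (key n hn).2
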